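/- (Upper bound of the ELBO, Lemma 4.1.) Let X, Y, U, B, Z be nonempty finite types. Let p be a pmf on X × Y with marginals p_X and p_Y. Let p_L be a strictly positive pmf on U × B × Z, let a be a kernel from U × B × Z to X with a(x|u,β,z) > 0 everywhere, let c be a kernel from Z to Y with c(y|z) > 0 everywhere, and let q be a kernel from X to U × B × Z with Z-marginal q_z(z|x) = ∑_{u,β} q(u,β,z|x). Define ELBO(x,y) = ∑_{u,β,z} q(u,β,z|x)·( log( p_L(u,β,z)·a(x|u,β,z)·c(y|z) ) − log q(u,β,z|x) ), the pmf r on X × Y × Z by r(x,y,z) = p(x,y)·q_z(z|x) with (Y,Z)-marginal r_{YZ}, and the pmf s on X × (U × B × Z) by s(x,u,β,z) = p_X(x)·q(u,β,z|x). Then ∑_{x,y} p(x,y)·ELBO(x,y) ≤ I_{r_{YZ}}(Y;Z) + I_s(X;(U,B,Z)) − H(p_Y) − H(p_X). -/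

import Mathlib

open Finset

lemma sum_cyc3 {α β γ : Type*} {M : Type*} [Fintype α] [Fintype β] [Fintype γ]
    [AddCommMonoid M] (f : α → β → γ → M) :
    ∑ a, ∑ b, ∑ c, f a b c = ∑ b, ∑ c, ∑ a, f a b c := by
  rw [Finset.sum_comm]
  exact Finset.sum_congr rfl fun b _ => Finset.sum_comm

lemma sum_cyc4 {α β γ δ : Type*} {M : Type*} [Fintype α] [Fintype β] [Fintype γ] [Fintype δ]
    [AddCommMonoid M] (f : α → β → γ → δ → M) :
    ∑ a, ∑ b, ∑ c, ∑ d, f a b c d = ∑ b, ∑ c, ∑ d, ∑ a, f a b c d := by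
  rw [Finset.sum_comm]
  exact Finset.sum_congr rfl fun b _ => sum_cyc3 _

lemma gibbs {ι : Type*} [Fintype ι] (w v : ι → ℝ)
    (hw : ∀ i, 0 ≤ w i) (hv : ∀ i, 0 ≤ v i)
    (hwv : ∀ i, w i ≠ 0 → 0 < v i)
    (hv1 : ∑ i, v i ≤ 1) (hw1 : ∑ i, w i = 1) :
    ∑ i, w i * (Real.log (v i) - Real.log (w i)) ≤ 0 := by
  have key : ∀ i, w i * (Real.log (v i) - Real.log (w i)) ≤ v i - w i := by
    intro i
    rcases eq_or_ne (w i) 0 with h | h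
    · simp [h, hv i]
    · have hwi : 0 < w i := (hw i).lt_of_ne (Ne.symm h)
      have hvi : 0 < v i := hwv i h
      have h1 := Real.log_le_sub_one_of_pos (div_pos hvi hwi)
      have hlog : Real.log (v i) - Real.log (w i) = Real.log (v i / w i) :=
        (Real.log_div hvi.ne' hwi.ne').symm
      rw [hlog]
      calc w i * Real.log (v i / w i) ≤ w i * (v i / w i - 1) :=
            mul_le_mul_of_nonneg_left h1 (hw i)
        _ = v i - w i := by field_simp
  calc ∑ i, w i * (Real.log (v i) - Real.log (w i)) ≤ ∑ i, (v i - w i) :=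
        Finset.sum_le_sum fun i _ => key i
    _ = (∑ i, v i) - ∑ i, w i := Finset.sum_sub_distrib _ _
    _ ≤ 0 := by rw [hw1]; linarith


/-- **Upper bound of the ELBO (Lemma 4.1).**  The expected ELBO is at most
`I_{r_YZ}(Y;Z) + I_s(X;(U,B,Z)) - H(p_Y) - H(p_X)`, where
`r x y z = p x y * q_z z|x` and `s x u β z = p_X x * q u β z|x`. -/
theorem elbo_upper_bound {X Y U B Z : Type*}
    [Fintype X] [Fintype Y] [Fintype U] [Fintype B] [Fintype Z]
    [Nonempty X] [Nonempty Y] [Nonempty U] [Nonempty B] [Nonempty Z]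
    (p : X → Y → ℝ) (hp0 : ∀ x y, 0 ≤ p x y) (hp1 : ∑ x, ∑ y, p x y = 1)
    (pL : U → B → Z → ℝ) (hpL0 : ∀ u β z, 0 < pL u β z)
    (hpL1 : ∑ u, ∑ β, ∑ z, pL u β z = 1)
    (a : U → B → Z → X → ℝ) (ha0 : ∀ u β z x, 0 < a u β z x)
    (ha1 : ∀ u β z, ∑ x, a u β z x = 1)
    (c : Z → Y → ℝ) (hc0 : ∀ z y, 0 < c z y) (hc1 : ∀ z, ∑ y, c z y = 1)
    (q : X → U → B → Z → ℝ) (hq0 : ∀ x u β z, 0 ≤ q x u β z)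
    (hq1 : ∀ x, ∑ u, ∑ β, ∑ z, q x u β z = 1)
    (qz : X → Z → ℝ) (hqz : ∀ x z, qz x z = ∑ u, ∑ β, q x u β z)
    (ELBO : X → Y → ℝ)
    (hELBO : ∀ x y, ELBO x y = ∑ u, ∑ β, ∑ z, q x u β z *
        (Real.log (pL u β z * a u β z x * c z y) - Real.log (q x u β z)))
    (rYZ : Y → Z → ℝ) (hrYZ : ∀ y z, rYZ y z = ∑ x, p x y * qz x z)
    (s : X → U → B → Z → ℝ)
    (hs : ∀ x u β z, s x u β z = (∑ y, p x y) * q x u β z) :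
    ∑ x, ∑ y, p x y * ELBO x y
      ≤ (∑ y, ∑ z, rYZ y z *
            Real.log (rYZ y z / ((∑ z', rYZ y z') * (∑ y', rYZ y' z))))
        + (∑ x, ∑ u, ∑ β, ∑ z, s x u β z *
            Real.log (s x u β z /
              ((∑ u', ∑ β', ∑ z', s x u' β' z') * (∑ x', s x' u β z))))
        - (-∑ y, (∑ x, p x y) * Real.log (∑ x, p x y))
        - (-∑ x, (∑ y, p x y) * Real.log (∑ y, p x y)) := by
  set pX : X → ℝ := fun x => ∑ y, p x y with hpX
  set pY : Y → ℝ := fun y => ∑ x, p x y with hpY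
  set rZ : Z → ℝ := fun z => ∑ y, rYZ y z with hrZ
  set sM : U → B → Z → ℝ := fun u β z => ∑ x, s x u β z with hsM
  -- basic nonnegativity
  have hpX0 : ∀ x, 0 ≤ pX x := fun x => Finset.sum_nonneg fun y _ => hp0 x y
  have hqz0 : ∀ x z, 0 ≤ qz x z := fun x z => by
    rw [hqz]; exact Finset.sum_nonneg fun u _ => Finset.sum_nonneg fun β _ => hq0 x u β z
  have hs0 : ∀ x u β z, 0 ≤ s x u β z := fun x u β z => by
    rw [hs]; exact mul_nonneg (hpX0 x) (hq0 x u β z)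
  have hr0 : ∀ y z, 0 ≤ rYZ y z := fun y z => by
    rw [hrYZ]; exact Finset.sum_nonneg fun x _ => mul_nonneg (hp0 x y) (hqz0 x z)
  -- row sums
  have hrow_s : ∀ x, ∑ u, ∑ β, ∑ z, s x u β z = pX x := by
    intro x
    simp only [hs, ← Finset.mul_sum]
    rw [hq1, mul_one]
  have hsum_s : ∑ x, ∑ u, ∑ β, ∑ z, s x u β z = 1 := by
    simp only [hrow_s]; exact hp1
  have hqz1 : ∀ x, ∑ z, qz x z = 1 := by
    intro x
    have h1 : ∑ z, qz x z = ∑ z, ∑ u, ∑ β, q x u β z := by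
      exact Finset.sum_congr rfl fun z _ => hqz x z
    rw [h1, sum_cyc3 fun z u β => q x u β z]
    exact hq1 x
  have hrow_r : ∀ y, ∑ z, rYZ y z = pY y := by
    intro y
    have h1 : ∑ z, rYZ y z = ∑ x, ∑ z, p x y * qz x z := by
      rw [← Finset.sum_comm]
      exact Finset.sum_congr rfl fun z _ => hrYZ y z
    rw [h1]
    have h2 : ∀ x, ∑ z, p x y * qz x z = p x y := by
      intro x
      rw [← Finset.mul_sum, hqz1 x, mul_one]
    simp only [h2, hpY]
  have hsum_r : ∑ y, ∑ z, rYZ y z = 1 := by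
    simp only [hrow_r]
    rw [hpY, Finset.sum_comm]
    exact hp1
  -- pointwise positivity consequences
  have hs_pos : ∀ x u β z, s x u β z ≠ 0 → 0 < pX x ∧ 0 < q x u β z ∧ 0 < sM u β z := by
    intro x u β z hne
    have hspos : 0 < s x u β z := (hs0 x u β z).lt_of_ne (Ne.symm hne)
    have hsx : s x u β z = pX x * q x u β z := hs x u β z
    have hq' : 0 < q x u β z :=
      (hq0 x u β z).lt_of_ne (Ne.symm fun h0 => hne (by rw [hsx, h0, mul_zero]))
    have hpx : 0 < pX x :=
      (hpX0 x).lt_of_ne (Ne.symm fun h0 => hne (by rw [hsx, h0, zero_mul]))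
    have hsm : 0 < sM u β z := by
      calc (0:ℝ) < s x u β z := hspos
        _ ≤ sM u β z := Finset.single_le_sum (fun x' _ => hs0 x' u β z) (Finset.mem_univ x)
    exact ⟨hpx, hq', hsm⟩
  have hr_pos : ∀ y z, rYZ y z ≠ 0 → 0 < pY y ∧ 0 < rZ z := by
    intro y z hne
    have hrpos : 0 < rYZ y z := (hr0 y z).lt_of_ne (Ne.symm hne)
    constructor
    · calc (0:ℝ) < rYZ y z := hrpos
        _ ≤ ∑ z', rYZ y z' := Finset.single_le_sum (fun z' _ => hr0 y z') (Finset.mem_univ z)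
        _ = pY y := hrow_r y
    · calc (0:ℝ) < rYZ y z := hrpos
        _ ≤ rZ z := Finset.single_le_sum (fun y' _ => hr0 y' z) (Finset.mem_univ y)
  -- Gibbs inequality 1
  have G1 : ∑ x, ∑ u, ∑ β, ∑ z, s x u β z *
      (Real.log (pL u β z * a u β z x) - Real.log (s x u β z)) ≤ 0 := by
    have hv1 : ∑ x, ∑ u, ∑ β, ∑ z, pL u β z * a u β z x = 1 := by
      rw [sum_cyc4 fun x u β z => pL u β z * a u β z x]
      simp only [← Finset.mul_sum, ha1, mul_one]
      exact hpL1
    have := gibbs (ι := X × U × B × Z)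
      (fun i => s i.1 i.2.1 i.2.2.1 i.2.2.2)
      (fun i => pL i.2.1 i.2.2.1 i.2.2.2 * a i.2.1 i.2.2.1 i.2.2.2 i.1)
      (fun i => hs0 _ _ _ _)
      (fun i => le_of_lt (mul_pos (hpL0 _ _ _) (ha0 _ _ _ _)))
      (fun i _ => mul_pos (hpL0 _ _ _) (ha0 _ _ _ _))
      (le_of_eq (by simpa [Fintype.sum_prod_type] using hv1))
      (by simpa [Fintype.sum_prod_type] using hsum_s)
    simpa [Fintype.sum_prod_type] using this
  -- Gibbs inequality 3 (X-marginal product)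
  have G3 : ∑ x, ∑ u, ∑ β, ∑ z, s x u β z *
      (Real.log (pX x * sM u β z) - Real.log (s x u β z)) ≤ 0 := by
    have hsum_sM : ∑ u, ∑ β, ∑ z, sM u β z = 1 := by
      rw [hsM]
      rw [← sum_cyc4 fun x u β z => s x u β z]
      exact hsum_s
    have hv1 : ∑ x, ∑ u, ∑ β, ∑ z, pX x * sM u β z = 1 := by
      simp only [← Finset.mul_sum, hsum_sM]
      simp only [mul_one]
      exact hp1
    have := gibbs (ι := X × U × B × Z)
      (fun i => s i.1 i.2.1 i.2.2.1 i.2.2.2)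
      (fun i => pX i.1 * sM i.2.1 i.2.2.1 i.2.2.2)
      (fun i => hs0 _ _ _ _)
      (fun i => mul_nonneg (hpX0 _) (Finset.sum_nonneg fun x' _ => hs0 _ _ _ _))
      (fun i hne => mul_pos (hs_pos _ _ _ _ hne).1 (hs_pos _ _ _ _ hne).2.2)
      (le_of_eq (by simpa [Fintype.sum_prod_type] using hv1))
      (by simpa [Fintype.sum_prod_type] using hsum_s)
    simpa [Fintype.sum_prod_type] using this
  -- Gibbs inequality 2
  have G2 : ∑ y, ∑ z, rYZ y z *
      (Real.log (c z y * rZ z) - Real.log (rYZ y z)) ≤ 0 := by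
    have hsum_rZ : ∑ z, rZ z = 1 := by
      rw [hrZ, Finset.sum_comm]
      exact hsum_r
    have hv1 : ∑ y, ∑ z, c z y * rZ z = 1 := by
      rw [Finset.sum_comm]
      simp only [← Finset.sum_mul, hc1, one_mul]
      exact hsum_rZ
    have := gibbs (ι := Y × Z)
      (fun i => rYZ i.1 i.2)
      (fun i => c i.2 i.1 * rZ i.2)
      (fun i => hr0 _ _)
      (fun i => mul_nonneg (le_of_lt (hc0 _ _)) (Finset.sum_nonneg fun y' _ => hr0 _ _))
      (fun i hne => mul_pos (hc0 _ _) (hr_pos _ _ hne).2)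
      (le_of_eq (by simpa [Fintype.sum_prod_type] using hv1))
      (by simpa [Fintype.sum_prod_type] using hsum_r)
    simpa [Fintype.sum_prod_type] using this
  -- LHS decomposition
  have hELBO' : ∀ x y, ELBO x y =
      (∑ u, ∑ β, ∑ z, q x u β z *
          (Real.log (pL u β z * a u β z x) - Real.log (q x u β z)))
        + ∑ z, qz x z * Real.log (c z y) := by
    intro x y
    rw [hELBO]
    have h1 : ∀ u β z, q x u β z *
        (Real.log (pL u β z * a u β z x * c z y) - Real.log (q x u β z))
        = q x u β z * (Real.log (pL u β z * a u β z x) - Real.log (q x u β z))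
          + q x u β z * Real.log (c z y) := by
      intro u β z
      rw [Real.log_mul (mul_pos (hpL0 u β z) (ha0 u β z x)).ne' (hc0 z y).ne']
      ring
    simp only [h1, Finset.sum_add_distrib]
    congr 1
    rw [(sum_cyc3 fun z u β => q x u β z * Real.log (c z y)).symm]
    refine Finset.sum_congr rfl fun z _ => ?_
    simp only [← Finset.sum_mul]
    rw [← hqz]
  have EL : ∑ x, ∑ y, p x y * ELBO x y =
      (∑ x, ∑ u, ∑ β, ∑ z, s x u β z *
          (Real.log (pL u β z * a u β z x) - Real.log (q x u β z)))
        + ∑ y, ∑ z, rYZ y z * Real.log (c z y) := by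
    have step1 : ∑ x, ∑ y, p x y * ELBO x y =
        (∑ x, ∑ y, p x y * ∑ u, ∑ β, ∑ z, q x u β z *
            (Real.log (pL u β z * a u β z x) - Real.log (q x u β z)))
          + ∑ x, ∑ y, p x y * ∑ z, qz x z * Real.log (c z y) := by
      simp only [← Finset.sum_add_distrib]
      refine Finset.sum_congr rfl fun x _ => Finset.sum_congr rfl fun y _ => ?_
      rw [hELBO', mul_add]
    rw [step1]
    congr 1
    · -- first piece
      have h2 : ∀ x, ∑ y, p x y * ∑ u, ∑ β, ∑ z, q x u β z *
          (Real.log (pL u β z * a u β z x) - Real.log (q x u β z))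
          = ∑ u, ∑ β, ∑ z, s x u β z *
            (Real.log (pL u β z * a u β z x) - Real.log (q x u β z)) := by
        intro x
        rw [← Finset.sum_mul]
        simp only [Finset.mul_sum]
        refine Finset.sum_congr rfl fun u _ => Finset.sum_congr rfl fun β _ =>
          Finset.sum_congr rfl fun z _ => ?_
        rw [hs]
        ring
      exact Finset.sum_congr rfl fun x _ => h2 x
    · -- second piece
      have h3 : ∑ x, ∑ y, p x y * ∑ z, qz x z * Real.log (c z y)
          = ∑ x, ∑ y, ∑ z, p x y * (qz x z * Real.log (c z y)) := by
        simp only [Finset.mul_sum]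
      rw [h3, sum_cyc3 fun x y z => p x y * (qz x z * Real.log (c z y))]
      refine Finset.sum_congr rfl fun y _ => Finset.sum_congr rfl fun z _ => ?_
      simp only [← mul_assoc, ← Finset.sum_mul]
      rw [← hrYZ]
  -- RHS simplification: Y part
  have hIYpt : ∀ y z, rYZ y z *
      Real.log (rYZ y z / ((∑ z', rYZ y z') * (∑ y', rYZ y' z)))
      = rYZ y z * (Real.log (rYZ y z) - Real.log (rZ z)) - rYZ y z * Real.log (pY y) := by
    intro y z
    rcases eq_or_ne (rYZ y z) 0 with h | h
    · simp [h]
    · obtain ⟨hpy, hrz⟩ := hr_pos y z h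
      rw [show (∑ z', rYZ y z') = pY y from hrow_r y,
        show (∑ y', rYZ y' z) = rZ z from rfl,
        Real.log_div h (mul_pos hpy hrz).ne', Real.log_mul hpy.ne' hrz.ne']
      ring
  have ERY : (∑ y, ∑ z, rYZ y z *
      Real.log (rYZ y z / ((∑ z', rYZ y z') * (∑ y', rYZ y' z))))
      + ∑ y, pY y * Real.log (pY y)
      = ∑ y, ∑ z, rYZ y z * (Real.log (rYZ y z) - Real.log (rZ z)) := by
    have h1 : ∀ y, ∑ z, rYZ y z * Real.log (pY y) = pY y * Real.log (pY y) := by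
      intro y
      rw [← Finset.sum_mul, hrow_r y]
    simp only [hIYpt, Finset.sum_sub_distrib, h1]
    ring
  -- RHS simplification: X part
  have hIXpt : ∀ x u β z, s x u β z *
      Real.log (s x u β z / ((∑ u', ∑ β', ∑ z', s x u' β' z') * (∑ x', s x' u β z)))
      = s x u β z * (Real.log (s x u β z) - Real.log (sM u β z))
        - s x u β z * Real.log (pX x) := by
    intro x u β z
    rcases eq_or_ne (s x u β z) 0 with h | h
    · simp [h]
    · obtain ⟨hpx, hq', hsm⟩ := hs_pos x u β z h
      rw [show (∑ u', ∑ β', ∑ z', s x u' β' z') = pX x from hrow_s x,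
        show (∑ x', s x' u β z) = sM u β z from rfl,
        Real.log_div h (mul_pos hpx hsm).ne', Real.log_mul hpx.ne' hsm.ne']
      ring
  have ERX : (∑ x, ∑ u, ∑ β, ∑ z, s x u β z *
      Real.log (s x u β z / ((∑ u', ∑ β', ∑ z', s x u' β' z') * (∑ x', s x' u β z))))
      + ∑ x, pX x * Real.log (pX x)
      = ∑ x, ∑ u, ∑ β, ∑ z, s x u β z * (Real.log (s x u β z) - Real.log (sM u β z)) := by
    have h1 : ∀ x, ∑ u, ∑ β, ∑ z, s x u β z * Real.log (pX x)
        = pX x * Real.log (pX x) := by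
      intro x
      simp only [← Finset.sum_mul]
      rw [hrow_s x]
    simp only [hIXpt, Finset.sum_sub_distrib, h1]
    ring
  -- combine: Y-side inequality
  have hYineq : (∑ y, ∑ z, rYZ y z * Real.log (c z y))
      ≤ ∑ y, ∑ z, rYZ y z * (Real.log (rYZ y z) - Real.log (rZ z)) := by
    have hdiff : (∑ y, ∑ z, rYZ y z * Real.log (c z y))
        - (∑ y, ∑ z, rYZ y z * (Real.log (rYZ y z) - Real.log (rZ z)))
        = ∑ y, ∑ z, rYZ y z * (Real.log (c z y * rZ z) - Real.log (rYZ y z)) := by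
      simp only [← Finset.sum_sub_distrib]
      refine Finset.sum_congr rfl fun y _ => Finset.sum_congr rfl fun z _ => ?_
      rcases eq_or_ne (rYZ y z) 0 with h | h
      · simp [h]
      · obtain ⟨hpy, hrz⟩ := hr_pos y z h
        rw [Real.log_mul (hc0 z y).ne' hrz.ne']
        ring
    linarith [G2, hdiff]
  -- combine: X-side inequality
  have hXineq : (∑ x, ∑ u, ∑ β, ∑ z, s x u β z *
      (Real.log (pL u β z * a u β z x) - Real.log (q x u β z)))
      ≤ ∑ x, ∑ u, ∑ β, ∑ z, s x u β z * (Real.log (s x u β z) - Real.log (sM u β z)) := by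
    have hdiff : (∑ x, ∑ u, ∑ β, ∑ z, s x u β z *
        (Real.log (pL u β z * a u β z x) - Real.log (q x u β z)))
        - (∑ x, ∑ u, ∑ β, ∑ z, s x u β z * (Real.log (s x u β z) - Real.log (sM u β z)))
        = (∑ x, ∑ u, ∑ β, ∑ z, s x u β z *
            (Real.log (pL u β z * a u β z x) - Real.log (s x u β z)))
          + (∑ x, ∑ u, ∑ β, ∑ z, s x u β z *
            (Real.log (pX x * sM u β z) - Real.log (s x u β z))) := by
      simp only [← Finset.sum_add_distrib, ← Finset.sum_sub_distrib]
      refine Finset.sum_congr rfl fun x _ => Finset.sum_congr rfl fun u _ =>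
        Finset.sum_congr rfl fun β _ => Finset.sum_congr rfl fun z _ => ?_
      rcases eq_or_ne (s x u β z) 0 with h | h
      · simp [h]
      · obtain ⟨hpx, hq', hsm⟩ := hs_pos x u β z h
        have hlogs : Real.log (s x u β z) = Real.log (pX x) + Real.log (q x u β z) := by
          rw [hs]
          exact Real.log_mul hpx.ne' hq'.ne'
        rw [Real.log_mul hpx.ne' hsm.ne', hlogs]
        ring
    linarith [G1, G3, hdiff]
  -- final assembly
  have hgoalY : (∑ y, (∑ x, p x y) * Real.log (∑ x, p x y))
      = ∑ y, pY y * Real.log (pY y) := rfl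
  have hgoalX : (∑ x, (∑ y, p x y) * Real.log (∑ y, p x y))
      = ∑ x, pX x * Real.log (pX x) := rfl
  rw [EL, hgoalY, hgoalX]
  linarith [hYineq, hXineq, ERY, ERX]
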